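/- Quantitative soundness claim: fix a derivation 𝒟 in Variable Normal Form, a model F of Ax, and an integer U with G(F) + lh(𝒟) ≤ U. Let 𝒟₀ ⊢ t = u be a sub-derivation of 𝒟, ρ an assignment with dom(ρ) ⊆ var(𝒟), and σ a sequence of updates based on F, U and 𝒟 with G(ρ), G(σ), E(σ), seqlh(σ) ≤ U − lh(𝒟₀). Then there exist sequences σ₁ and σ₂ of updates based on F, U and 𝒟 with E(σᵢ), seqlh(σᵢ) ≤ lh(𝒟₀) and G(σᵢ) ≤ max(G(F), G(σ), G(ρ)) + lh(𝒟₀), such that, setting F′ = F*σ, ⟦t⟧_{F,ρ} ⊑ ⟦u⟧_{F′*σ₁,ρ} and ⟦u⟧_{F,ρ} ⊑ ⟦t⟧_{F′*σ₂,ρ}. -/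

import Mathlib

namespace PETS

/-! ## Approximate values -/

/-- The set `𝔻` of approximate values: binary strings plus `*` (unknown). -/
inductive D where
  | eps  : D
  | b0   : D → D
  | b1   : D → D
  | star : D
deriving DecidableEq

instance : Zero D := ⟨D.star⟩

/-- The approximation relation `⊑` on `𝔻`. -/
inductive Approx : D → D → Prop where
  | star (v : D) : Approx .star v
  | eps : Approx .eps .eps
  | b0 {v w : D} : Approx v w → Approx (.b0 v) (.b0 w)
  | b1 {v w : D} : Approx v w → Approx (.b1 v) (.b1 w)

/-- Componentwise extension of `⊑` to tuples. -/
def TApprox {n : ℕ} (u v : Fin n → D) : Prop := ∀ i, Approx (u i) (v i)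

/-- Compatibility `u △ v`. -/
def Compat (u v : D) : Prop := Approx u v ∨ Approx v u

/-- Componentwise compatibility of tuples. -/
def TCompat {n : ℕ} (u v : Fin n → D) : Prop := ∀ i, Compat (u i) (v i)

/-- The gauge `G(v)` of an approximate value. -/
def D.gauge : D → ℕ
  | .eps => 1
  | .star => 1
  | .b0 v => v.gauge + 1
  | .b1 v => v.gauge + 1

/-- The gauge of a tuple of approximate values. -/
def tupGauge {n : ℕ} (v : Fin n → D) : ℕ := Finset.univ.sup fun i => (v i).gauge

open Classical in
/-- `maxapprx S`: the `⊑`-greatest element of `S` if it exists, else `*`.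
In particular `maxapprx ∅ = *`. -/
noncomputable def maxapprx (S : Set D) : D :=
  if h : ∃ m, m ∈ S ∧ ∀ v ∈ S, Approx v m then h.choose else D.star

/-! ## Generators and consistent sets -/

/-- A finite set of (potential) generators for `𝔻^n → 𝔻`. -/
abbrev Gens (n : ℕ) := Finset ((Fin n → D) × D)

/-- `f` is a consistent set of generators for `𝔻^n → 𝔻`:
all values are `≠ *` and compatible arguments have compatible values. -/
def ConsistentGens {n : ℕ} (f : Gens n) : Prop :=
  (∀ p ∈ f, p.2 ≠ D.star) ∧
  ∀ p ∈ f, ∀ q ∈ f, TCompat p.1 q.1 → Compat p.2 q.2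

/-- `f[x] = { v | ∃ w ⊑ x, (w ↦ v) ∈ f }`. -/
def gensAt {n : ℕ} (f : Gens n) (x : Fin n → D) : Set D :=
  {v | ∃ w : Fin n → D, TApprox w x ∧ (w, v) ∈ f}

/-- The finitely generated map `f(x) = maxapprx f[x]`. -/
noncomputable def applyGens {n : ℕ} (f : Gens n) (x : Fin n → D) : D :=
  maxapprx (gensAt f x)

/-! ## Terms -/

/-- Terms over the language: variables, the basic symbols `ε`, `s₀`, `s₁`, and
countably many non-basic function symbols `op k` of each arity `a`
(a non-basic symbol is identified by the pair `(k, a)`). -/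
inductive Tm where
  | var : ℕ → Tm
  | eps : Tm
  | s0 : Tm → Tm
  | s1 : Tm → Tm
  | app : (k : ℕ) → (a : ℕ) → (Fin a → Tm) → Tm

/-- The length (number of symbols) of a term. -/
def Tm.lh : Tm → ℕ
  | .var _ => 1
  | .eps => 1
  | .s0 t => t.lh + 1
  | .s1 t => t.lh + 1
  | .app _ a args => (Finset.univ.sum fun i : Fin a => (args i).lh) + 1

/-- The set of variables occurring in a term. -/
def Tm.vars : Tm → Finset ℕ
  | .var x => {x}
  | .eps => ∅
  | .s0 t => t.vars
  | .s1 t => t.vars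
  | .app _ a args => Finset.univ.biUnion fun i : Fin a => (args i).vars

/-- Substitution `t[u/x]` of the term `u` for the variable `x` in `t`. -/
def Tm.subst (t : Tm) (x : ℕ) (u : Tm) : Tm :=
  match t with
  | .var y => if y = x then u else .var y
  | .eps => .eps
  | .s0 s => .s0 (s.subst x u)
  | .s1 s => .s1 (s.subst x u)
  | .app k a args => .app k a fun i => (args i).subst x u

/-- Simultaneous substitution of terms for all variables. -/
def Tm.msubst (σ : ℕ → Tm) : Tm → Tm
  | .var x => σ x
  | .eps => .eps
  | .s0 t => .s0 (t.msubst σ)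
  | .s1 t => .s1 (t.msubst σ)
  | .app k a args => .app k a fun i => (args i).msubst σ

/-! ## Frames and assignments -/

/-- An entry of a frame: a non-basic symbol `(k, a)` together with a
generator `(arg, out)` for `𝔻^a → 𝔻`. -/
abbrev Entry := Σ _k : ℕ, Σ a : ℕ, (Fin a → D) × D

/-- A frame: a finite set of entries, i.e. a finite partial map from
non-basic function symbols to finite sets of generators. -/
abbrev Frame := Finset Entry

/-- `F(f)[x]` for the symbol `f = (k, a)`:
the set `{ v | ∃ w ⊑ x, (w ↦ v) ∈ F(f) }`. -/
def Frame.setAt (F : Frame) (k a : ℕ) (x : Fin a → D) : Set D :=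
  {v | ∃ w : Fin a → D, TApprox w x ∧ (⟨k, a, (w, v)⟩ : Entry) ∈ F}

/-- The evaluation `F(f)(x)` of the finitely generated map of the non-basic
symbol `f = (k, a)` in the frame `F`. -/
noncomputable def Frame.app (F : Frame) (k a : ℕ) (x : Fin a → D) : D :=
  maxapprx (F.setAt k a x)

/-- The gauge of a frame entry. -/
def Entry.gauge (e : Entry) : ℕ := max (tupGauge e.2.2.1) e.2.2.2.gauge

/-- The gauge `G(F)` of a frame. -/
def Frame.gauge (F : Frame) : ℕ := F.sup Entry.gauge

/-- A frame is consistent if each of its sections is a consistent set of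
generators (values `≠ *`, compatible arguments have compatible values). -/
def Frame.Consistent (F : Frame) : Prop :=
  (∀ (k a : ℕ) (w : Fin a → D) (v : D), (⟨k, a, (w, v)⟩ : Entry) ∈ F → v ≠ D.star) ∧
  (∀ (k a : ℕ) (w w' : Fin a → D) (v v' : D),
    (⟨k, a, (w, v)⟩ : Entry) ∈ F → (⟨k, a, (w', v')⟩ : Entry) ∈ F →
    TCompat w w' → Compat v v')

/-- An assignment: a finitely supported map from variables to `𝔻`
(where the zero of `𝔻` is `*`, i.e. `ρ(x) = *` outside the domain). -/
abbrev Assignment := ℕ →₀ D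

/-- The gauge `G(ρ)` of an assignment. -/
noncomputable def Assignment.gauge (ρ : Assignment) : ℕ :=
  ρ.support.sup fun x => (ρ x).gauge

/-- The evaluation `⟦t⟧_{F,ρ}` of a term under a frame and an assignment:
basic symbols are evaluated as themselves, non-basic symbols via their
finitely generated maps. -/
noncomputable def eval (F : Frame) (ρ : Assignment) : Tm → D
  | .var x => ρ x
  | .eps => D.eps
  | .s0 t => D.b0 (eval F ρ t)
  | .s1 t => D.b1 (eval F ρ t)
  | .app k a args => F.app k a fun i => eval F ρ (args i)

/-! ## Nice axiom systems -/

/-- A generalized variable: a variable, `ε`, `s₀(x)` or `s₁(x)`. -/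
inductive GVar where
  | var : ℕ → GVar
  | eps : GVar
  | s0 : ℕ → GVar
  | s1 : ℕ → GVar
deriving DecidableEq

/-- The term denoted by a generalized variable. -/
def GVar.toTm : GVar → Tm
  | .var x => .var x
  | .eps => .eps
  | .s0 x => .s0 (.var x)
  | .s1 x => .s1 (.var x)

/-- The variables of a generalized variable. -/
def GVar.vars : GVar → Finset ℕ
  | .var x => {x}
  | .eps => ∅
  | .s0 x => {x}
  | .s1 x => {x}

/-- Applying an assignment to a generalized variable,
e.g. `ρ(sᵢ(x)) = sᵢ(ρ(x))`. -/
def GVar.evalA (ρ : Assignment) : GVar → D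
  | .var x => ρ x
  | .eps => D.eps
  | .s0 x => D.b0 (ρ x)
  | .s1 x => D.b1 (ρ x)

/-- Unifiability of two generalized variables (they have a common
substitution instance). -/
def GVar.unif : GVar → GVar → Prop
  | .var _, _ => True
  | _, .var _ => True
  | .eps, .eps => True
  | .s0 _, .s0 _ => True
  | .s1 _, .s1 _ => True
  | _, _ => False

/-- An axiom: an equation `f(t₁,…,tₐ) = rhs` where `f` is the non-basic
symbol `(k, a)` and each `tᵢ` is a generalized variable. -/
structure Axm where
  k : ℕ
  a : ℕ
  args : Fin a → GVar
  rhs : Tm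

/-- The left-hand side term `f(t₁,…,tₐ)` of an axiom. -/
def Axm.lhs (A : Axm) : Tm := .app A.k A.a fun i => (A.args i).toTm

/-- The variables of the left-hand side of an axiom. -/
def Axm.lhsVars (A : Axm) : Finset ℕ := Finset.univ.biUnion fun i => (A.args i).vars

/-- All variables of an axiom. -/
def Axm.vars (A : Axm) : Finset ℕ := A.lhsVars ∪ A.rhs.vars

/-- A nice set of axioms: each axiom has the form `f(x⃗) = t`, `f(ε,x⃗) = t`,
`f(x0,x⃗) = t` or `f(x1,x⃗) = t` (so all arguments beyond the first are plain
variables), the variables on the left are pairwise distinct, the right-hand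
side variables occur on the left, and no left-hand side occurs twice among
the axioms, also modulo substitution. -/
structure NiceAxioms (Ax : Set Axm) : Prop where
  shape : ∀ A ∈ Ax, ∀ i : Fin A.a, 0 < (i : ℕ) → ∃ x, A.args i = GVar.var x
  distinct : ∀ A ∈ Ax, ∀ i j : Fin A.a, i ≠ j → Disjoint ((A.args i).vars) ((A.args j).vars)
  rhsVars : ∀ A ∈ Ax, A.rhs.vars ⊆ A.lhsVars
  unique : ∀ A ∈ Ax, ∀ B ∈ Ax, A.k = B.k → ∀ h : A.a = B.a,
    (∀ i : Fin A.a, GVar.unif (A.args i) (B.args (Fin.cast h i))) → A = B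

/-! ## Derivations in PETS(Ax) -/

/-- Derivations of the pure equational theory with substitution `PETS(Ax)`:
`Deriv Ax t u` is the type of derivations ending in the equation `t = u`. -/
inductive Deriv (Ax : Set Axm) : Tm → Tm → Type where
  | ax (A : Axm) (hA : A ∈ Ax) (σ : ℕ → Tm) :
      Deriv Ax (A.lhs.msubst σ) (A.rhs.msubst σ)
  | refl (t : Tm) : Deriv Ax t t
  | symm {t u : Tm} (d : Deriv Ax u t) : Deriv Ax t u
  | trans {t s u : Tm} (d₁ : Deriv Ax t s) (d₂ : Deriv Ax s u) : Deriv Ax t u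
  | compat {t u : Tm} (s : Tm) (x : ℕ) (d : Deriv Ax t u) :
      Deriv Ax (s.subst x t) (s.subst x u)
  | subst {t u : Tm} (s : Tm) (x : ℕ) (d : Deriv Ax t u) :
      Deriv Ax (t.subst x s) (u.subst x s)

namespace Deriv

variable {Ax : Set Axm}

/-- The length `lh(𝒟)` of a derivation: the sum of the lengths of the
equations occurring in it plus the length of the additional syntax
identifying rule applications. -/
def lh : {a b : Tm} → Deriv Ax a b → ℕ
  | _, _, .ax A _ σ => (A.lhs.msubst σ).lh + (A.rhs.msubst σ).lh + 1
  | _, _, .refl t => t.lh + t.lh + 1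
  | a, b, .symm d => d.lh + (a.lh + b.lh + 1)
  | a, b, .trans d₁ d₂ => d₁.lh + d₂.lh + (a.lh + b.lh + 1)
  | _, _, @Deriv.compat _ t u s x d =>
      d.lh + ((s.subst x t).lh + (s.subst x u).lh + 1) + (s.lh + 1 + 1)
  | _, _, @Deriv.subst _ t u s x d =>
      d.lh + ((t.subst x s).lh + (u.subst x s).lh + 1)
        + (t.lh + s.lh + 1 + u.lh + s.lh + 1 + 2)

/-- The set of variables occurring in a derivation. -/
def varsOf : {a b : Tm} → Deriv Ax a b → Finset ℕ
  | _, _, .ax A _ σ => (A.lhs.msubst σ).vars ∪ (A.rhs.msubst σ).vars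
  | _, _, .refl t => t.vars
  | _, _, .symm d => d.varsOf
  | _, _, .trans d₁ d₂ => d₁.varsOf ∪ d₂.varsOf
  | _, _, @Deriv.compat _ _ _ s x d => d.varsOf ∪ s.vars ∪ {x}
  | _, _, @Deriv.subst _ _ _ s x d => d.varsOf ∪ s.vars ∪ {x}

/-- The list (with multiplicities) of variables of a derivation bound by
applications of the Substitution rule. -/
def bvars : {a b : Tm} → Deriv Ax a b → List ℕ
  | _, _, .ax _ _ _ => []
  | _, _, .refl _ => []
  | _, _, .symm d => d.bvars
  | _, _, .trans d₁ d₂ => d₁.bvars ++ d₂.bvars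
  | _, _, .compat _ _ d => d.bvars
  | _, _, @Deriv.subst _ _ _ _ x d => x :: d.bvars

/-- The set of axioms of `Ax` occurring (i.e. used by an Axiom rule) in a
derivation. -/
def axiomsUsed : {a b : Tm} → Deriv Ax a b → Set Axm
  | _, _, .ax A _ _ => {A}
  | _, _, .refl _ => ∅
  | _, _, .symm d => d.axiomsUsed
  | _, _, .trans d₁ d₂ => d₁.axiomsUsed ∪ d₂.axiomsUsed
  | _, _, .compat _ _ d => d.axiomsUsed
  | _, _, .subst _ _ d => d.axiomsUsed

/-- A substitution is an injective renaming of the variables of an axiom. -/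
def InjRenaming (A : Axm) (σ : ℕ → Tm) : Prop :=
  (∀ x ∈ A.vars, ∃ y, σ x = Tm.var y) ∧ Set.InjOn σ ↑A.vars

/-- Condition (1) of Variable Normal Form: every application of the Axiom
rule is an injective renaming of an axiom. -/
def VNFax : {a b : Tm} → Deriv Ax a b → Prop
  | _, _, .ax A _ σ => InjRenaming A σ
  | _, _, .refl _ => True
  | _, _, .symm d => d.VNFax
  | _, _, .trans d₁ d₂ => d₁.VNFax ∧ d₂.VNFax
  | _, _, .compat _ _ d => d.VNFax
  | _, _, .subst _ _ d => d.VNFax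

/-- Variable Normal Form: every Axiom rule application is an injective
renaming of an axiom in `Ax`, and every variable occurring in the derivation
either occurs in the final equation or is bound by exactly one application
of the Substitution rule. -/
def VNF {a b : Tm} (d : Deriv Ax a b) : Prop :=
  d.VNFax ∧ ∀ x ∈ d.varsOf, x ∈ a.vars ∪ b.vars ∨ d.bvars.count x = 1

end Deriv

/-! ## Models, updates, update sequences -/

/-- `F` is a model of `Ax`: for every axiom `t = u` in `Ax` and every
assignment `ρ`, `⟦t⟧_{F,ρ} ⊑ ⟦u⟧_{F,ρ}`. -/
def IsModel (F : Frame) (Ax : Set Axm) : Prop :=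
  ∀ A ∈ Ax, ∀ ρ : Assignment, Approx (eval F ρ A.lhs) (eval F ρ A.rhs)

/-- `F` is a `κ`-model of the derivation `d`: `F` is a frame (its sections
are consistent sets) with `G(F) ≤ κ`, and for every axiom `t = u` of `Ax`
occurring in `d` and every assignment `ρ` with `dom(ρ) ⊆ var(d)` and
`G(ρ) ≤ κ`, we have `⟦t⟧_{F,ρ} ⊑ ⟦u⟧_{F,ρ}`. -/
def IsKModel {Ax : Set Axm} {a b : Tm} (F : Frame) (κ : ℕ) (d : Deriv Ax a b) : Prop :=
  F.Consistent ∧ F.gauge ≤ κ ∧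
  ∀ A ∈ d.axiomsUsed, ∀ ρ : Assignment,
    ↑ρ.support ⊆ (↑d.varsOf : Set ℕ) → ρ.gauge ≤ κ →
    Approx (eval F ρ A.lhs) (eval F ρ A.rhs)

/-- An update `f : v⃗ ↦ w` for the non-basic symbol `f = (k, a)`. -/
structure Upd where
  k : ℕ
  a : ℕ
  v : Fin a → D
  w : D

/-- The gauge `G(v⃗, w)` of an update. -/
def Upd.gauge (u : Upd) : ℕ := max (tupGauge u.v) u.w.gauge

/-- The frame entry corresponding to an update. -/
def Upd.entry (u : Upd) : Entry := ⟨u.k, u.a, (u.v, u.w)⟩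

/-- `F * (f : v⃗ ↦ w)`: the frame `F` updated by the update. -/
noncomputable def Frame.apUpd (F : Frame) (u : Upd) : Frame := insert u.entry F

/-- `F * σ` for a sequence of updates `σ`. -/
noncomputable def Frame.apSeq (F : Frame) (σ : List Upd) : Frame :=
  σ.foldl Frame.apUpd F

/-- `u` is an update based on `F`, `κ` and `d`: a generator `v⃗ ↦ w` with
`G(v⃗, w) ≤ κ` for a non-basic symbol `f`, obtained from an axiom
`f(t⃗) = u'` of `Ax` occurring in `d` and an assignment `ρ` by
`vᵢ = ρ(tᵢ)` and `w = ⟦u'⟧_{F,ρ}`. -/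
def IsUpdate {Ax : Set Axm} {a b : Tm} (F : Frame) (κ : ℕ) (d : Deriv Ax a b)
    (u : Upd) : Prop :=
  u.w ≠ D.star ∧ u.gauge ≤ κ ∧
  ∃ A ∈ d.axiomsUsed, ∃ ρ : Assignment,
    u = ⟨A.k, A.a, fun i => (A.args i).evalA ρ, eval F ρ A.rhs⟩

/-- `σ` is a sequence of updates based on `F`, `κ` and `d`: each update in
the sequence is an update based on the frame produced so far. -/
def IsUpdSeq {Ax : Set Axm} {a b : Tm} (κ : ℕ) (d : Deriv Ax a b) :
    Frame → List Upd → Prop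
  | _, [] => True
  | F, u :: σ => IsUpdate F κ d u ∧ IsUpdSeq κ d (F.apUpd u) σ

/-- The gauge `G(σ)` of a sequence of updates. -/
def seqGauge (σ : List Upd) : ℕ := (σ.map Upd.gauge).foldr max 0

/-- The extent `E(σ)` of a sequence of updates (maximal arity used). -/
def seqExt (σ : List Upd) : ℕ := (σ.map Upd.a).foldr max 0

/-! ## Instructions -/

/-- Instructions: `A[t→u]`, `A[t←u]` for axiom (instances) `t = u`, and
`S↑[t,s/x]`, `S↓[t,s/x]` for terms `t, s` and a variable `x`. -/
inductive Instr where
  | axF : Tm → Tm → Instr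
  | axB : Tm → Tm → Instr
  | sUp : Tm → Tm → ℕ → Instr
  | sDown : Tm → Tm → ℕ → Instr

/-- The length of an instruction. -/
def Instr.lh : Instr → ℕ
  | .axF t u => t.lh + u.lh + 1
  | .axB t u => t.lh + u.lh + 1
  | .sUp t s _ => t.lh + s.lh + 1
  | .sDown t s _ => t.lh + s.lh + 1

/-- The length of a sequence of instructions. -/
def instrsLh (τ : List Instr) : ℕ := (τ.map Instr.lh).sum

/-- An instruction is *for* the derivation `d` if its axiom instructions
carry (injective renamings of) axioms occurring in `d`. -/
def Instr.For {Ax : Set Axm} {a b : Tm} (d : Deriv Ax a b) : Instr → Prop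
  | .axF t u => ∃ A ∈ d.axiomsUsed, ∃ σ : ℕ → Tm,
      Deriv.InjRenaming A σ ∧ t = A.lhs.msubst σ ∧ u = A.rhs.msubst σ
  | .axB t u => ∃ A ∈ d.axiomsUsed, ∃ σ : ℕ → Tm,
      Deriv.InjRenaming A σ ∧ t = A.lhs.msubst σ ∧ u = A.rhs.msubst σ
  | .sUp _ _ _ => True
  | .sDown _ _ _ => True

/-- The instruction sequences `→Inst_𝒟` (first component) and `←Inst_𝒟`
(second component) extracted from a derivation. -/
def Deriv.insts {Ax : Set Axm} : {a b : Tm} → Deriv Ax a b → List Instr × List Instr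
  | _, _, .ax A _ σ =>
      ([.axF (A.lhs.msubst σ) (A.rhs.msubst σ)],
       [.axB (A.lhs.msubst σ) (A.rhs.msubst σ)])
  | _, _, .refl _ => ([], [])
  | _, _, .symm d => (d.insts.2, d.insts.1)
  | _, _, .trans d₁ d₂ => (d₁.insts.1 ++ d₂.insts.1, d₂.insts.2 ++ d₁.insts.2)
  | _, _, .compat _ _ d => d.insts
  | _, _, @Deriv.subst _ t u s x d =>
      (Instr.sUp t s x :: (d.insts.1 ++ [Instr.sDown u s x]),
       Instr.sUp u s x :: (d.insts.2 ++ [Instr.sDown t s x]))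

/-- `Ψ(t ← u, ⟨F, ρ⟩)`: for `t` of the form `f(t⃗)`, the update `f : v⃗ ↦ w`
with `vᵢ = ρ(tᵢ)` and `w = ⟦u⟧_{F,ρ}`. -/
noncomputable def Psi (t u : Tm) (F : Frame) (ρ : Assignment) : Upd :=
  match t with
  | .app k a args => ⟨k, a, fun i => eval F ρ (args i), eval F ρ u⟩
  | _ => ⟨0, 0, Fin.elim0, eval F ρ u⟩

/-- One step of the state transformer `Φ` (the frame `F` is the fixed base
frame; the state consists of the update sequence so far and the current
assignment). -/
noncomputable def PhiStep (F : Frame) (st : List Upd × Assignment) :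
    Instr → List Upd × Assignment
  | .axF _ _ => st
  | .axB t u => (st.1 ++ [Psi t u (F.apSeq st.1) st.2], st.2)
  | .sUp _ s x => (st.1, Finsupp.update st.2 x (eval (F.apSeq st.1) st.2 s))
  | .sDown _ _ x => (st.1, st.2.erase x)

/-- The state transformer `Φ(τ, ⟨F, σ, ρ⟩) = ⟨F, σ', ρ'⟩`, processing the
instruction sequence `τ` from left to right. -/
noncomputable def Phi (F : Frame) (τ : List Instr) (st : List Upd × Assignment) :
    List Upd × Assignment :=
  τ.foldl (PhiStep F) st

/-! ## Sub-derivations -/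

/-- `SubDeriv e d`: `e` is a sub-derivation of `d`. -/
inductive SubDeriv {Ax : Set Axm} :
    {a b c d : Tm} → Deriv Ax a b → Deriv Ax c d → Prop where
  | refl {a b : Tm} (d : Deriv Ax a b) : SubDeriv d d
  | symm {a b t u : Tm} {e : Deriv Ax a b} {d : Deriv Ax u t} :
      SubDeriv e d → SubDeriv e (Deriv.symm d)
  | transL {a b t s u : Tm} {e : Deriv Ax a b} {d₁ : Deriv Ax t s} {d₂ : Deriv Ax s u} :
      SubDeriv e d₁ → SubDeriv e (Deriv.trans d₁ d₂)
  | transR {a b t s u : Tm} {e : Deriv Ax a b} {d₁ : Deriv Ax t s} {d₂ : Deriv Ax s u} :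
      SubDeriv e d₂ → SubDeriv e (Deriv.trans d₁ d₂)
  | compat {a b t u : Tm} (s : Tm) (x : ℕ) {e : Deriv Ax a b} {d : Deriv Ax t u} :
      SubDeriv e d → SubDeriv e (Deriv.compat s x d)
  | subst {a b t u : Tm} (s : Tm) (x : ℕ) {e : Deriv Ax a b} {d : Deriv Ax t u} :
      SubDeriv e d → SubDeriv e (Deriv.subst s x d)

/-! ### Section 1: basic lemmas -/


theorem Approx.rfl : ∀ v : D, Approx v v
  | .eps => .eps
  | .star => .star _
  | .b0 v => .b0 (Approx.rfl v)
  | .b1 v => .b1 (Approx.rfl v)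

theorem Approx.trans' : ∀ {a b c : D}, Approx a b → Approx b c → Approx a c := by
  intro a b c h1 h2
  induction h1 generalizing c with
  | star => exact .star c
  | eps => exact h2
  | b0 _ ih => cases h2 with | b0 h2 => exact .b0 (ih h2)
  | b1 _ ih => cases h2 with | b1 h2 => exact .b1 (ih h2)

theorem Approx.antisymm : ∀ {a b : D}, Approx a b → Approx b a → a = b := by
  intro a b h1 h2
  induction h1 with
  | star => cases h2; rfl
  | eps => rfl
  | b0 _ ih => cases h2 with | b0 h2 => rw [ih h2]
  | b1 _ ih => cases h2 with | b1 h2 => rw [ih h2]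

theorem eq_star_of_approx_star {v : D} (h : Approx v D.star) : v = D.star := by
  cases h; rfl

theorem compat_of_approx_approx {a c : D} (h1 : Approx a c) :
    ∀ {b : D}, Approx b c → Compat a b := by
  induction h1 with
  | star => intro b _; exact Or.inl (.star b)
  | eps =>
    intro b h2; cases h2
    · exact Or.inr (.star _)
    · exact Or.inl .eps
  | b0 _ ih =>
    intro b h2
    cases h2 with
    | star => exact Or.inr (.star _)
    | b0 h2 => exact (ih h2).imp Approx.b0 Approx.b0
  | b1 _ ih =>
    intro b h2
    cases h2 with
    | star => exact Or.inr (.star _)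
    | b1 h2 => exact (ih h2).imp Approx.b1 Approx.b1

theorem Compat.symm' {a b : D} (h : Compat a b) : Compat b a := h.symm

theorem TApprox.rfl {n : ℕ} (v : Fin n → D) : TApprox v v := fun _ => Approx.rfl _

/-! maxima of compatible finite sets -/

theorem exists_max_compat : ∀ (s : Finset D), s.Nonempty →
    (∀ a ∈ s, ∀ b ∈ s, Compat a b) → ∃ m ∈ s, ∀ v ∈ s, Approx v m := by
  intro s
  induction s using Finset.induction_on with
  | empty => intro h; exact absurd h (by simp)
  | insert a s hnotmem ih =>
    intro _ hc
    rcases s.eq_empty_or_nonempty with rfl | hne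
    · exact ⟨a, by simp, by simp [Approx.rfl]⟩
    · obtain ⟨m, hm, hmax⟩ := ih hne (fun x hx y hy =>
        hc x (Finset.mem_insert_of_mem hx) y (Finset.mem_insert_of_mem hy))
      rcases hc a (Finset.mem_insert_self a s) m (Finset.mem_insert_of_mem hm) with h | h
      · refine ⟨m, Finset.mem_insert_of_mem hm, ?_⟩
        intro v hv
        rcases Finset.mem_insert.mp hv with rfl | hv
        · exact h
        · exact hmax v hv
      · refine ⟨a, Finset.mem_insert_self a s, ?_⟩
        intro v hv
        rcases Finset.mem_insert.mp hv with rfl | hv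
        · exact Approx.rfl v
        · exact (hmax v hv).trans' h

theorem exists_max_of_finite {S : Set D} (hfin : S.Finite) (hne : S.Nonempty)
    (hc : ∀ a ∈ S, ∀ b ∈ S, Compat a b) : ∃ m ∈ S, ∀ v ∈ S, Approx v m := by
  obtain ⟨m, hm, hmax⟩ := exists_max_compat hfin.toFinset
    (by simpa using hne) (by intro a ha b hb; simp at ha hb; exact hc a ha b hb)
  simp only [Set.Finite.mem_toFinset] at hm
  exact ⟨m, hm, fun v hv => hmax v (hfin.mem_toFinset.mpr hv)⟩

theorem maxapprx_eq {S : Set D} {m : D} (hm : m ∈ S) (hmax : ∀ v ∈ S, Approx v m) :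
    maxapprx S = m := by
  unfold maxapprx
  have h : ∃ m', m' ∈ S ∧ ∀ v ∈ S, Approx v m' := ⟨m, hm, hmax⟩
  rw [dif_pos h]
  exact Approx.antisymm (hmax _ h.choose_spec.1) (h.choose_spec.2 m hm)

theorem maxapprx_mem_or_star (S : Set D) : maxapprx S ∈ S ∨ maxapprx S = D.star := by
  unfold maxapprx
  split
  · next h => exact Or.inl h.choose_spec.1
  · exact Or.inr rfl

/-! frame lemmas -/

theorem setAt_mono {F G : Frame} (hFG : F ⊆ G) {k a : ℕ} {x y : Fin a → D}
    (hxy : TApprox x y) : F.setAt k a x ⊆ G.setAt k a y := by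
  rintro v ⟨w, hw, hmem⟩
  exact ⟨w, fun i => (hw i).trans' (hxy i), hFG hmem⟩

theorem setAt_finite (F : Frame) (k a : ℕ) (x : Fin a → D) : (F.setAt k a x).Finite := by
  apply Set.Finite.subset (F.image (fun e => e.2.2.2)).finite_toSet
  rintro v ⟨w, _, hmem⟩
  simp only [Finset.coe_image, Set.mem_image, Finset.mem_coe]
  exact ⟨_, hmem, rfl⟩

theorem setAt_compat {F : Frame} (hFc : F.Consistent) {k a : ℕ} {x : Fin a → D} :
    ∀ v ∈ F.setAt k a x, ∀ v' ∈ F.setAt k a x, Compat v v' := by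
  rintro v ⟨w, hw, hmem⟩ v' ⟨w', hw', hmem'⟩
  exact hFc.2 k a w w' v v' hmem hmem'
    (fun i => compat_of_approx_approx (hw i) (hw' i))

theorem le_app {F : Frame} (hFc : F.Consistent) {k a : ℕ} {x : Fin a → D} {v : D}
    (hv : v ∈ F.setAt k a x) : Approx v (F.app k a x) := by
  obtain ⟨m, hm, hmax⟩ := exists_max_of_finite (setAt_finite F k a x) ⟨v, hv⟩
    (setAt_compat hFc)
  rw [show F.app k a x = maxapprx (F.setAt k a x) from rfl, maxapprx_eq hm hmax]
  exact hmax v hv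

theorem app_mono {F G : Frame} (hGc : G.Consistent) (hFG : F ⊆ G) {k a : ℕ}
    {x y : Fin a → D} (hxy : TApprox x y) : Approx (F.app k a x) (G.app k a y) := by
  rcases maxapprx_mem_or_star (F.setAt k a x) with h | h
  · exact le_app hGc (setAt_mono hFG hxy h)
  · rw [show F.app k a x = maxapprx (F.setAt k a x) from rfl, h]
    exact .star _

theorem gauge_apply (ρ : Assignment) (x : ℕ) : (ρ x).gauge ≤ max ρ.gauge 1 := by
  by_cases h : x ∈ ρ.support
  · exact le_max_of_le_left (Finset.le_sup (f := fun x => (ρ x).gauge) h)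
  · rw [Finsupp.notMem_support_iff.mp h]
    exact le_max_of_le_right le_rfl

theorem Tm.lh_pos : ∀ t : Tm, 1 ≤ t.lh := by
  intro t; cases t <;> (simp only [Tm.lh]; omega)

theorem entry_gauge_le {F : Frame} {k a : ℕ} {w : Fin a → D} {v : D}
    (h : (⟨k, a, (w, v)⟩ : Entry) ∈ F) : v.gauge ≤ F.gauge := by
  calc v.gauge ≤ Entry.gauge ⟨k, a, (w, v)⟩ := le_max_right _ _
  _ ≤ F.gauge := Finset.le_sup h

theorem gauge_eval_le (F : Frame) (ρ : Assignment) :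
    ∀ t : Tm, (eval F ρ t).gauge ≤ max F.gauge ρ.gauge + t.lh := by
  intro t
  induction t with
  | var x =>
    have := gauge_apply ρ x
    simp only [eval, Tm.lh]
    omega
  | eps => simp [eval, Tm.lh, D.gauge]
  | s0 t ih => simp only [eval, Tm.lh, D.gauge]; omega
  | s1 t ih => simp only [eval, Tm.lh, D.gauge]; omega
  | app k a args ih =>
    simp only [eval, Tm.lh]
    rw [show (Frame.app F k a fun i => eval F ρ (args i)) =
          maxapprx (F.setAt k a (fun i => eval F ρ (args i))) from rfl]
    rcases maxapprx_mem_or_star (F.setAt k a (fun i => eval F ρ (args i))) with h | h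
    · obtain ⟨w, _, hmem⟩ := h
      have h2 := entry_gauge_le hmem
      omega
    · rw [h]; simp only [D.gauge]; omega

theorem eval_mono {F G : Frame} (hGc : G.Consistent) (hFG : F ⊆ G)
    {ρ ρ' : Assignment} : ∀ {t : Tm}, (∀ x ∈ t.vars, Approx (ρ x) (ρ' x)) →
    Approx (eval F ρ t) (eval G ρ' t) := by
  intro t
  induction t with
  | var x => intro h; exact h x (by simp [Tm.vars])
  | eps => intro _; exact .eps
  | s0 t ih => intro h; exact .b0 (ih h)
  | s1 t ih => intro h; exact .b1 (ih h)
  | app k a args ih =>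
    intro h
    exact app_mono hGc hFG (fun i => ih i (fun x hx =>
      h x (Finset.mem_biUnion.mpr ⟨i, Finset.mem_univ i, hx⟩)))


/-! ### Section 2: evaluation and substitution lemmas -/

theorem eval_toTm (F : Frame) (ρ : Assignment) (g : GVar) :
    eval F ρ g.toTm = g.evalA ρ := by
  cases g <;> rfl

theorem toTm_vars (g : GVar) : g.toTm.vars = g.vars := by
  cases g <;> rfl

theorem eval_msubst {F : Frame} {ρ ρ' : Assignment} {σs : ℕ → Tm} :
    ∀ {t : Tm}, (∀ x ∈ t.vars, eval F ρ (σs x) = ρ' x) →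
    eval F ρ (t.msubst σs) = eval F ρ' t := by
  intro t
  induction t with
  | var x => intro h; exact h x (by simp [Tm.vars])
  | eps => intro _; rfl
  | s0 t ih => intro h; simp only [Tm.msubst, eval]; rw [ih h]
  | s1 t ih => intro h; simp only [Tm.msubst, eval]; rw [ih h]
  | app k a args ih =>
    intro h
    simp only [Tm.msubst, eval]
    congr 1
    funext i
    exact ih i (fun x hx => h x (Finset.mem_biUnion.mpr ⟨i, Finset.mem_univ i, hx⟩))

theorem eval_subst (F : Frame) (ρ : Assignment) (x : ℕ) (s : Tm) :
    ∀ t : Tm, eval F ρ (t.subst x s) =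
      eval F (Finsupp.update ρ x (eval F ρ s)) t := by
  intro t
  induction t with
  | var y =>
    simp only [Tm.subst]
    rcases eq_or_ne y x with rfl | hne
    · simp [eval, Finsupp.coe_update]
    · simp [eval, Finsupp.coe_update, Function.update, hne]
  | eps => rfl
  | s0 t ih => simp only [Tm.subst, eval]; rw [ih]
  | s1 t ih => simp only [Tm.subst, eval]; rw [ih]
  | app k a args ih =>
    simp only [Tm.subst, eval]
    congr 1
    funext i
    exact ih i

theorem msubst_lh {σs : ℕ → Tm} : ∀ {t : Tm},
    (∀ x ∈ t.vars, ∃ y, σs x = Tm.var y) → (t.msubst σs).lh = t.lh := by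
  intro t
  induction t with
  | var x =>
    intro h
    obtain ⟨y, hy⟩ := h x (by simp [Tm.vars])
    simp [Tm.msubst, hy, Tm.lh]
  | eps => intro _; rfl
  | s0 t ih => intro h; simp only [Tm.msubst, Tm.lh]; rw [ih h]
  | s1 t ih => intro h; simp only [Tm.msubst, Tm.lh]; rw [ih h]
  | app k a args ih =>
    intro h
    simp only [Tm.msubst, Tm.lh]
    congr 1
    apply Finset.sum_congr rfl
    intro i _
    exact ih i (fun x hx => h x (Finset.mem_biUnion.mpr ⟨i, Finset.mem_univ i, hx⟩))

theorem lhs_lh_ge (A : Axm) (σs : ℕ → Tm) : A.a + 1 ≤ (A.lhs.msubst σs).lh := by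
  simp only [Axm.lhs, Tm.msubst, Tm.lh]
  have : ∀ i : Fin A.a, 1 ≤ ((A.args i).toTm.msubst σs).lh := fun i => Tm.lh_pos _
  calc A.a + 1 = (∑ _i : Fin A.a, 1) + 1 := by simp
  _ ≤ _ := by
      have := Finset.sum_le_sum (s := Finset.univ)
        (fun (i : Fin A.a) _ => this i)
      omega

theorem evalA_gauge (ρ : Assignment) (g : GVar) :
    (g.evalA ρ).gauge ≤ max ρ.gauge 1 + 1 := by
  cases g with
  | var x => have := gauge_apply ρ x; simp only [GVar.evalA]; omega
  | eps => simp [GVar.evalA, D.gauge]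
  | s0 x => have := gauge_apply ρ x; simp only [GVar.evalA, D.gauge]; omega
  | s1 x => have := gauge_apply ρ x; simp only [GVar.evalA, D.gauge]; omega

theorem approx_of_evalA_approx {g : GVar} {ρ₀ ρ₁ : Assignment}
    (h : Approx (g.evalA ρ₀) (g.evalA ρ₁)) : ∀ y ∈ g.vars, Approx (ρ₀ y) (ρ₁ y) := by
  cases g with
  | var x =>
    intro y hy
    simp only [GVar.vars, Finset.mem_singleton] at hy
    subst hy; exact h
  | eps => intro y hy; simp [GVar.vars] at hy
  | s0 x =>
    intro y hy
    simp only [GVar.vars, Finset.mem_singleton] at hy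
    subst hy; cases h with | b0 h => exact h
  | s1 x =>
    intro y hy
    simp only [GVar.vars, Finset.mem_singleton] at hy
    subst hy; cases h with | b1 h => exact h

theorem unif_of_approx {g h : GVar} {ρ₀ ρ₁ : Assignment}
    (hc : Approx (g.evalA ρ₀) (h.evalA ρ₁)) : GVar.unif g h := by
  cases g <;> cases h <;> simp only [GVar.unif] <;>
    first
    | trivial
    | (simp only [GVar.evalA] at hc; cases hc)

theorem entry_cases {k a : ℕ} {w : Fin a → D} {v : D} {k' a' : ℕ}
    {w' : Fin a' → D} {v' : D}
    (h : (⟨k, a, (w, v)⟩ : Entry) = ⟨k', a', (w', v')⟩) :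
    k = k' ∧ ∃ ha : a = a', (∀ i, w i = w' (Fin.cast ha i)) ∧ v = v' := by
  obtain ⟨h1, h2⟩ := Sigma.mk.inj_iff.mp h
  subst h1
  obtain ⟨h3, h4⟩ := Sigma.mk.inj_iff.mp (eq_of_heq h2)
  subst h3
  have h5 : (w, v) = (w', v') := eq_of_heq h4
  have h6 : w = w' := congrArg Prod.fst h5
  have h7 : v = v' := congrArg Prod.snd h5
  exact ⟨rfl, rfl, fun i => by rw [h6]; rfl, h7⟩

/-! ### Section 3: joins and the update preservation lemma -/

theorem fin_cast_self {n : ℕ} (h : n = n) (i : Fin n) : Fin.cast h i = i := rfl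

theorem compat_b0_inv {a b : D} (h : Compat (D.b0 a) (D.b0 b)) : Compat a b := by
  rcases h with h | h
  · cases h with | b0 h => exact Or.inl h
  · cases h with | b0 h => exact Or.inr h

theorem compat_b1_inv {a b : D} (h : Compat (D.b1 a) (D.b1 b)) : Compat a b := by
  rcases h with h | h
  · cases h with | b1 h => exact Or.inl h
  · cases h with | b1 h => exact Or.inr h

open Classical in
noncomputable def joinD (a b : D) : D := if Approx a b then b else a

theorem joinD_left {a b : D} (h : Compat a b) : Approx a (joinD a b) := by
  unfold joinD; split
  · next h' => exact h'
  · exact Approx.rfl a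

theorem joinD_right {a b : D} (h : Compat a b) : Approx b (joinD a b) := by
  unfold joinD; split
  · exact Approx.rfl b
  · next h' =>
    rcases h with h | h
    · exact absurd h h'
    · exact h

noncomputable def joinVal (ρ₀ : Assignment) (g : GVar) (xi : D) (y : ℕ) : D :=
  match g, xi with
  | .var _, v => joinD v (ρ₀ y)
  | .s0 _, .b0 c => joinD c (ρ₀ y)
  | .s1 _, .b1 c => joinD c (ρ₀ y)
  | _, _ => ρ₀ y

theorem eval_lhs (F : Frame) (ρ : Assignment) (A : Axm) :
    eval F ρ A.lhs = F.app A.k A.a (fun i => (A.args i).evalA ρ) := by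
  simp only [Axm.lhs, eval]
  congr 1
  funext i
  exact eval_toTm F ρ (A.args i)

theorem exists_join (A : Axm)
    (hdist : ∀ i j : Fin A.a, i ≠ j → Disjoint ((A.args i).vars) ((A.args j).vars))
    (ρ₀ : Assignment) (x : Fin A.a → D)
    (hx : ∀ i, Compat (x i) ((A.args i).evalA ρ₀)) :
    ∃ ρ'' : Assignment, (∀ y, Approx (ρ₀ y) (ρ'' y)) ∧
      ∀ i, Approx (x i) ((A.args i).evalA ρ'') := by
  classical
  set f : ℕ → D := fun y =>
    if h : ∃ i, y ∈ (A.args i).vars then joinVal ρ₀ (A.args h.choose) (x h.choose) y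
    else ρ₀ y with hf
  have huniq : ∀ {y : ℕ} {i j : Fin A.a},
      y ∈ (A.args i).vars → y ∈ (A.args j).vars → i = j := by
    intro y i j hi hj
    by_contra hne
    exact Finset.disjoint_left.mp (hdist i j hne) hi hj
  have hfy : ∀ {y : ℕ} {i : Fin A.a}, y ∈ (A.args i).vars →
      f y = joinVal ρ₀ (A.args i) (x i) y := by
    intro y i hy
    have hex : ∃ j, y ∈ (A.args j).vars := ⟨i, hy⟩
    rw [hf]
    simp only
    rw [dif_pos hex, huniq hex.choose_spec hy]
  have hsupp : ∀ y, f y ≠ 0 → y ∈ ρ₀.support ∪ A.lhsVars := by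
    intro y hy
    by_cases hex : ∃ i, y ∈ (A.args i).vars
    · exact Finset.mem_union_right _ (Finset.mem_biUnion.mpr
        ⟨hex.choose, Finset.mem_univ _, hex.choose_spec⟩)
    · rw [hf] at hy
      simp only [dif_neg hex] at hy
      exact Finset.mem_union_left _ (Finsupp.mem_support_iff.mpr hy)
  refine ⟨Finsupp.onFinset _ f hsupp, ?_, ?_⟩
  · -- ρ₀ ⊑ f pointwise
    intro y
    simp only [Finsupp.onFinset_apply]
    by_cases hex : ∃ i, y ∈ (A.args i).vars
    · obtain ⟨i, hy⟩ := hex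
      have hy0 := hy
      have hc := hx i
      rcases hgi : A.args i with z | _ | z | z <;> rw [hgi] at hy hc <;>
        rw [hfy hy0, hgi]
      · -- var z
        simp only [GVar.vars, Finset.mem_singleton] at hy
        subst hy
        simp only [joinVal]
        exact joinD_right hc
      · simp [GVar.vars] at hy
      · -- s0 z
        simp only [GVar.vars, Finset.mem_singleton] at hy
        subst hy
        generalize hxi : x i = xi at hc ⊢
        cases xi <;> simp only [joinVal]
        · exact Approx.rfl _
        · exact joinD_right (compat_b0_inv hc)
        · exact Approx.rfl _
        · exact Approx.rfl _
      · -- s1 z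
        simp only [GVar.vars, Finset.mem_singleton] at hy
        subst hy
        generalize hxi : x i = xi at hc ⊢
        cases xi <;> simp only [joinVal]
        · exact Approx.rfl _
        · exact Approx.rfl _
        · exact joinD_right (compat_b1_inv hc)
        · exact Approx.rfl _
    · rw [hf]
      simp only [dif_neg hex]
      exact Approx.rfl _
  · -- x i ⊑ evalA ρ'' (A.args i)
    intro i
    have hc := hx i
    rcases hgi : A.args i with z | _ | z | z <;> rw [hgi] at hc
    · -- var z
      have hz : z ∈ (A.args i).vars := by rw [hgi]; simp [GVar.vars]
      simp only [GVar.evalA, Finsupp.onFinset_apply, hfy hz, hgi, joinVal]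
      exact joinD_left hc
    · -- eps
      simp only [GVar.evalA] at hc ⊢
      generalize hxi : x i = xi at hc ⊢
      rcases hc with h | h
      · exact h
      · cases h; exact .eps
    · -- s0 z
      have hz : z ∈ (A.args i).vars := by rw [hgi]; simp [GVar.vars]
      simp only [GVar.evalA, Finsupp.onFinset_apply, hfy hz, hgi]
      generalize hxi : x i = xi at hc ⊢
      cases xi <;> simp only [joinVal]
      · rcases hc with h | h
        · cases h
        · cases h
      · exact .b0 (joinD_left (compat_b0_inv hc))
      · rcases hc with h | h
        · cases h
        · cases h
      · exact .star _
    · -- s1 z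
      have hz : z ∈ (A.args i).vars := by rw [hgi]; simp [GVar.vars]
      simp only [GVar.evalA, Finsupp.onFinset_apply, hfy hz, hgi]
      generalize hxi : x i = xi at hc ⊢
      cases xi <;> simp only [joinVal]
      · rcases hc with h | h
        · cases h
        · cases h
      · rcases hc with h | h
        · cases h
        · cases h
      · exact .b1 (joinD_left (compat_b1_inv hc))
      · exact .star _

theorem insert_entry_good {Ax : Set Axm} (hAx : NiceAxioms Ax) {G : Frame}
    (hGc : G.Consistent) (hGm : IsModel G Ax) {A : Axm} (hA : A ∈ Ax)
    (ρ₀ : Assignment) {w : D} (hw : w ≠ D.star)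
    (hww : Approx w (eval G ρ₀ A.rhs)) :
    (insert (⟨A.k, A.a, (fun i => (A.args i).evalA ρ₀, w)⟩ : Entry) G).Consistent ∧
    IsModel (insert (⟨A.k, A.a, (fun i => (A.args i).evalA ρ₀, w)⟩ : Entry) G) Ax := by
  set E : Entry := ⟨A.k, A.a, (fun i => (A.args i).evalA ρ₀, w)⟩ with hE
  -- key compatibility fact
  have hkey : ∀ (w2 : Fin A.a → D) (v2 : D),
      (⟨A.k, A.a, (w2, v2)⟩ : Entry) ∈ G →
      (∀ i, Compat (w2 i) ((A.args i).evalA ρ₀)) → Compat v2 w := by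
    intro w2 v2 hmem hcomp
    obtain ⟨ρ'', hmono, hup⟩ := exists_join A (hAx.distinct A hA) ρ₀ w2 hcomp
    have h1 : v2 ∈ G.setAt A.k A.a (fun i => (A.args i).evalA ρ'') :=
      ⟨w2, hup, hmem⟩
    have h2 : Approx v2 (eval G ρ'' A.rhs) := by
      have h3 := hGm A hA ρ''
      rw [eval_lhs] at h3
      exact (le_app hGc h1).trans' h3
    have h4 : Approx w (eval G ρ'' A.rhs) :=
      hww.trans' (eval_mono hGc (Finset.Subset.refl G) (fun y _ => hmono y))
    exact compat_of_approx_approx h2 h4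
  have hcons : (insert E G).Consistent := by
    constructor
    · intro k a w' v h
      rcases Finset.mem_insert.mp h with h | h
      · obtain ⟨_, _, _, hsnd⟩ := entry_cases h
        rw [hsnd]; exact hw
      · exact hGc.1 k a w' v h
    · intro k a w1 w2 v1 v2 h1 h2 hcomp
      rcases Finset.mem_insert.mp h1 with h1 | h1 <;>
        rcases Finset.mem_insert.mp h2 with h2 | h2
      · obtain ⟨_, ⟨ha1, _, hs1⟩⟩ := entry_cases h1
        obtain ⟨_, ⟨_, _, hs2⟩⟩ := entry_cases h2
        rw [hs1, hs2]; exact Or.inl (Approx.rfl w)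
      · -- h1 = E, h2 ∈ G
        obtain ⟨hk, ⟨ha, hfst, hsnd⟩⟩ := entry_cases h1
        subst hk; subst ha
        rw [hsnd]
        refine (hkey w2 v2 h2 (fun i => ?_)).symm'
        have := (hcomp i).symm'
        rw [hfst i, fin_cast_self] at this
        exact this
      · -- h1 ∈ G, h2 = E
        obtain ⟨hk, ⟨ha, hfst, hsnd⟩⟩ := entry_cases h2
        subst hk; subst ha
        rw [hsnd]
        refine hkey w1 v1 h1 (fun i => ?_)
        have := hcomp i
        rw [hfst i, fin_cast_self] at this
        exact this
      · exact hGc.2 k a w1 w2 v1 v2 h1 h2 hcomp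
  refine ⟨hcons, fun B hB ρ₁ => ?_⟩
  rw [eval_lhs]
  set x : Fin B.a → D := fun i => (B.args i).evalA ρ₁ with hxdef
  rw [show (insert E G).app B.k B.a x = maxapprx ((insert E G).setAt B.k B.a x)
    from rfl]
  rcases maxapprx_mem_or_star ((insert E G).setAt B.k B.a x) with hm | hm
  · obtain ⟨wv, hwvx, hmem⟩ := hm
    rcases Finset.mem_insert.mp hmem with he | hG2
    · -- the maximum is the new generator
      obtain ⟨hk, ⟨ha, hfst, hsnd⟩⟩ := entry_cases he
      have hAB : A = B := by
        refine hAx.unique A hA B hB hk.symm ha.symm (fun i => ?_)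
        refine unif_of_approx (ρ₀ := ρ₀) (ρ₁ := ρ₁) ?_
        have h5 := hwvx (Fin.cast ha.symm i)
        rw [hfst (Fin.cast ha.symm i)] at h5
        have hcc : Fin.cast ha (Fin.cast ha.symm i) = i := by
          apply Fin.ext; simp
        rw [hcc] at h5
        exact h5
      subst hAB
      rw [hsnd]
      have hρ : ∀ y ∈ A.lhsVars, Approx (ρ₀ y) (ρ₁ y) := by
        intro y hy
        obtain ⟨i, _, hyi⟩ := Finset.mem_biUnion.mp hy
        refine approx_of_evalA_approx ?_ y hyi
        have h5 := hwvx i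
        rw [hfst i, fin_cast_self] at h5
        exact h5
      exact hww.trans' (eval_mono hcons (Finset.subset_insert _ _)
        (fun y hy => hρ y (hAx.rhsVars A hA hy)))
    · -- the maximum is an old generator
      have h1 : maxapprx ((insert E G).setAt B.k B.a x) ∈ G.setAt B.k B.a x :=
        ⟨wv, hwvx, hG2⟩
      have h5 : Approx (G.app B.k B.a x) (eval G ρ₁ B.rhs) := by
        have := hGm B hB ρ₁
        rwa [eval_lhs] at this
      exact ((le_app hGc h1).trans' h5).trans'
        (eval_mono hcons (Finset.subset_insert _ _) (fun y _ => Approx.rfl _))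
  · rw [hm]
    exact .star _

/-! ### Section 4: update sequences and derivation lemmas -/

theorem entry_gauge_eq (u : Upd) : u.entry.gauge = u.gauge := rfl

theorem apSeq_nil (F : Frame) : F.apSeq [] = F := rfl

theorem apSeq_append (F : Frame) (σ τ : List Upd) :
    F.apSeq (σ ++ τ) = (F.apSeq σ).apSeq τ := List.foldl_append

theorem apSeq_supset : ∀ (σ : List Upd) (F : Frame), F ⊆ F.apSeq σ
  | [], F => Finset.Subset.refl F
  | _ :: σ, F => (Finset.subset_insert _ _).trans (apSeq_supset σ _)

theorem apSeq_mono : ∀ (σ : List Upd) {F G : Frame}, F ⊆ G → F.apSeq σ ⊆ G.apSeq σ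
  | [], _, _, h => h
  | _ :: σ, _, _, h => apSeq_mono σ (Finset.insert_subset_insert _ h)

theorem seqGauge_nil : seqGauge [] = 0 := rfl

theorem seqGauge_cons (u : Upd) (σ : List Upd) :
    seqGauge (u :: σ) = max u.gauge (seqGauge σ) := rfl

theorem seqExt_cons (u : Upd) (σ : List Upd) :
    seqExt (u :: σ) = max u.a (seqExt σ) := rfl

theorem seqGauge_append (σ τ : List Upd) :
    seqGauge (σ ++ τ) = max (seqGauge σ) (seqGauge τ) := by
  induction σ with
  | nil => simp [seqGauge]
  | cons u σ ih =>
    rw [List.cons_append, seqGauge_cons, seqGauge_cons, ih, Nat.max_assoc]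

theorem seqExt_append (σ τ : List Upd) :
    seqExt (σ ++ τ) = max (seqExt σ) (seqExt τ) := by
  induction σ with
  | nil => simp [seqExt]
  | cons u σ ih =>
    rw [List.cons_append, seqExt_cons, seqExt_cons, ih, Nat.max_assoc]

theorem apSeq_gauge : ∀ (σ : List Upd) (F : Frame),
    (F.apSeq σ).gauge ≤ max F.gauge (seqGauge σ) := by
  intro σ
  induction σ with
  | nil => intro F; simp [Frame.apSeq]
  | cons u σ ih =>
    intro F
    have h1 : (F.apUpd u).gauge ≤ max F.gauge u.gauge := by
      rw [show F.apUpd u = insert u.entry F from rfl]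
      rw [show (insert u.entry F).gauge = u.entry.gauge ⊔ F.gauge from
        Finset.sup_insert]
      rw [entry_gauge_eq]
      exact max_le (le_max_right _ _) (le_max_left _ _)
    have h2 := ih (F.apUpd u)
    rw [seqGauge_cons, ← max_assoc]
    exact h2.trans (max_le_max h1 le_rfl)

theorem isUpdSeq_append {Ax : Set Axm} {a b : Tm} {κ : ℕ} {d : Deriv Ax a b} :
    ∀ {σ τ : List Upd} {F : Frame}, IsUpdSeq κ d F σ →
      IsUpdSeq κ d (F.apSeq σ) τ → IsUpdSeq κ d F (σ ++ τ) := by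
  intro σ
  induction σ with
  | nil => intro τ F _ h; exact h
  | cons u σ ih =>
    intro τ F h1 h2
    exact ⟨h1.1, ih h1.2 h2⟩

theorem axiomsUsed_sub {Ax : Set Axm} : ∀ {a b : Tm} (d : Deriv Ax a b),
    d.axiomsUsed ⊆ Ax := by
  intro a b d
  induction d with
  | ax A hA σs => exact Set.singleton_subset_iff.mpr hA
  | refl t => exact Set.empty_subset _
  | symm d ih => exact ih
  | trans d₁ d₂ ih₁ ih₂ => exact Set.union_subset ih₁ ih₂
  | compat s x d ih => exact ih
  | subst s x d ih => exact ih

theorem seq_good {Ax : Set Axm} (hAx : NiceAxioms Ax) {a b : Tm} {d : Deriv Ax a b}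
    {κ : ℕ} : ∀ (σ : List Upd) {H G : Frame}, H ⊆ G → H.Consistent → IsModel H Ax →
    G.Consistent → IsModel G Ax → IsUpdSeq κ d H σ →
    (G ⊆ G.apSeq σ) ∧ (G.apSeq σ).Consistent ∧ IsModel (G.apSeq σ) Ax ∧
      (H.apSeq σ) ⊆ (G.apSeq σ) ∧ (H.apSeq σ).Consistent ∧ IsModel (H.apSeq σ) Ax := by
  intro σ
  induction σ with
  | nil =>
    intro H G hHG hHc hHm hGc hGm _
    exact ⟨Finset.Subset.refl _, hGc, hGm, hHG, hHc, hHm⟩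
  | cons u σ ih =>
    intro H G hHG hHc hHm hGc hGm hseq
    obtain ⟨⟨hwne, _, A, hA, ρ₀, hueq⟩, hseq'⟩ := hseq
    subst hueq
    have hH' := insert_entry_good hAx hHc hHm (axiomsUsed_sub d hA) ρ₀ hwne
      (Approx.rfl _)
    have hG' := insert_entry_good hAx hGc hGm (axiomsUsed_sub d hA) ρ₀ hwne
      (eval_mono hGc hHG (fun _ _ => Approx.rfl _))
    obtain ⟨g1, g2, g3, g4, g5, g6⟩ := ih (Finset.insert_subset_insert _ hHG)
      hH'.1 hH'.2 hG'.1 hG'.2 hseq'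
    exact ⟨(Finset.subset_insert _ _).trans g1, g2, g3, g4, g5, g6⟩

theorem subDeriv_trans {Ax : Set Axm} {a b c d e f : Tm} {D1 : Deriv Ax a b}
    {D2 : Deriv Ax c d} {D3 : Deriv Ax e f}
    (h1 : SubDeriv D1 D2) (h2 : SubDeriv D2 D3) : SubDeriv D1 D3 := by
  induction h2 with
  | refl => exact h1
  | symm _ ih => exact .symm (ih h1)
  | transL _ ih => exact .transL (ih h1)
  | transR _ ih => exact .transR (ih h1)
  | compat s x _ ih => exact .compat s x (ih h1)
  | subst s x _ ih => exact .subst s x (ih h1)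

theorem subDeriv_lh_le {Ax : Set Axm} {a b c d : Tm} {e : Deriv Ax a b}
    {D : Deriv Ax c d} (h : SubDeriv e D) : e.lh ≤ D.lh := by
  induction h with
  | refl => exact le_rfl
  | symm _ ih => simp only [Deriv.lh]; omega
  | transL _ ih => simp only [Deriv.lh]; omega
  | transR _ ih => simp only [Deriv.lh]; omega
  | compat s x _ ih => simp only [Deriv.lh]; omega
  | subst s x _ ih => simp only [Deriv.lh]; omega

theorem subDeriv_vars_sub {Ax : Set Axm} {a b c d : Tm} {e : Deriv Ax a b}
    {D : Deriv Ax c d} (h : SubDeriv e D) : e.varsOf ⊆ D.varsOf := by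
  induction h with
  | refl => exact Finset.Subset.refl _
  | symm _ ih => exact ih
  | transL _ ih => exact ih.trans Finset.subset_union_left
  | transR _ ih => exact ih.trans Finset.subset_union_right
  | compat s x _ ih =>
    exact ih.trans (Finset.subset_union_left.trans Finset.subset_union_left)
  | subst s x _ ih =>
    exact ih.trans (Finset.subset_union_left.trans Finset.subset_union_left)

theorem subDeriv_axioms_sub {Ax : Set Axm} {a b c d : Tm} {e : Deriv Ax a b}
    {D : Deriv Ax c d} (h : SubDeriv e D) : e.axiomsUsed ⊆ D.axiomsUsed := by
  induction h with
  | refl => exact subset_rfl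
  | symm _ ih => exact ih
  | transL _ ih => exact ih.trans Set.subset_union_left
  | transR _ ih => exact ih.trans Set.subset_union_right
  | compat s x _ ih => exact ih
  | subst s x _ ih => exact ih

theorem subDeriv_vnfax {Ax : Set Axm} {a b c d : Tm} {e : Deriv Ax a b}
    {D : Deriv Ax c d} (h : SubDeriv e D) (hv : D.VNFax) : e.VNFax := by
  induction h with
  | refl => exact hv
  | symm _ ih => exact ih hv
  | transL _ ih => exact ih hv.1
  | transR _ ih => exact ih hv.2
  | compat s x _ ih => exact ih hv
  | subst s x _ ih => exact ih hv

theorem update_support_sub (ρ : Assignment) (x : ℕ) (v : D) :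
    (Finsupp.update ρ x v).support ⊆ insert x ρ.support := by
  intro y hy
  rcases eq_or_ne y x with rfl | hne
  · exact Finset.mem_insert_self _ _
  · apply Finset.mem_insert_of_mem
    rw [Finsupp.mem_support_iff] at hy ⊢
    rwa [Finsupp.coe_update, Function.update_of_ne hne] at hy

theorem update_gauge_le (ρ : Assignment) (x : ℕ) (v : D) :
    Assignment.gauge (Finsupp.update ρ x v) ≤ max ρ.gauge v.gauge := by
  apply Finset.sup_le
  intro y hy
  rcases eq_or_ne y x with rfl | hne
  · simp only [Finsupp.coe_update, Function.update_self]
    exact le_max_right _ _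
  · rw [Finsupp.coe_update, Function.update_of_ne hne]
    have hy' : y ∈ ρ.support := by
      rw [Finsupp.mem_support_iff] at hy ⊢
      rwa [Finsupp.coe_update, Function.update_of_ne hne] at hy
    exact le_max_of_le_left (Finset.le_sup (f := fun x => (ρ x).gauge) hy')

theorem update_apply_self (ρ : Assignment) (x : ℕ) (v : D) :
    Finsupp.update ρ x v x = v := by
  simp [Finsupp.coe_update]

theorem update_apply_ne (ρ : Assignment) {x y : ℕ} (v : D) (h : y ≠ x) :
    Finsupp.update ρ x v y = ρ y := by
  simp [Finsupp.coe_update, Function.update_of_ne h]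

/-- head variable of a term (for reading off injective renamings) -/
def Tm.headVar : Tm → ℕ
  | .var y => y
  | _ => 0

/-! ### Section 5: the main claim, proved by induction on the sub-derivation -/

theorem main_claim {Ax : Set Axm} (hAx : NiceAxioms Ax)
    {t₀ u₀ : Tm} (d : Deriv Ax t₀ u₀) (hVNF : d.VNFax)
    (F : Frame) (hFc : F.Consistent) (hM : IsModel F Ax)
    (U : ℕ) (hU : F.gauge + d.lh ≤ U) :
    ∀ {t u : Tm} (d₀ : Deriv Ax t u), SubDeriv d₀ d →
    ∀ (τ : List Upd) (ρ : Assignment), ρ.support ⊆ d.varsOf →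
    IsUpdSeq U d F τ → ρ.gauge ≤ U - d₀.lh → seqGauge τ ≤ U - d₀.lh →
    seqExt τ ≤ U - d₀.lh → τ.length ≤ U - d₀.lh →
    ∃ σ₁ σ₂ : List Upd,
      IsUpdSeq U d (F.apSeq τ) σ₁ ∧ IsUpdSeq U d (F.apSeq τ) σ₂ ∧
      seqExt σ₁ ≤ d₀.lh ∧ σ₁.length ≤ d₀.lh ∧ seqExt σ₂ ≤ d₀.lh ∧ σ₂.length ≤ d₀.lh ∧
      seqGauge σ₁ ≤ max F.gauge (max (seqGauge τ) ρ.gauge) + d₀.lh ∧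
      seqGauge σ₂ ≤ max F.gauge (max (seqGauge τ) ρ.gauge) + d₀.lh ∧
      Approx (eval (F.apSeq τ) ρ t) (eval ((F.apSeq τ).apSeq σ₁) ρ u) ∧
      Approx (eval (F.apSeq τ) ρ u) (eval ((F.apSeq τ).apSeq σ₂) ρ t) := by
  intro t u d₀
  induction d₀ with
  | refl s =>
    intro hsub τ ρ hdom hτ h1 h2 h3 h4
    exact ⟨[], [], trivial, trivial, Nat.zero_le _, Nat.zero_le _, Nat.zero_le _,
      Nat.zero_le _, Nat.zero_le _, Nat.zero_le _, Approx.rfl _, Approx.rfl _⟩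
  | ax A hA σs =>
    intro hsub τ ρ hdom hτ h1 h2 h3 h4
    obtain ⟨hFsub, hGc, hGm, -, -, -⟩ :=
      seq_good hAx τ (Finset.Subset.refl F) hFc hM hFc hM hτ
    have hinj : Deriv.InjRenaming A σs := subDeriv_vnfax hsub hVNF
    classical
    set ρ' : Assignment := Finsupp.onFinset A.vars
      (fun x => if x ∈ A.vars then ρ ((σs x).headVar) else 0)
      (fun x hx => by by_contra hmem; apply hx; simp [hmem])
      with hρ'def
    have hρ'app : ∀ x, ρ' x = if x ∈ A.vars then ρ ((σs x).headVar) else 0 :=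
      fun x => rfl
    have hσx : ∀ x ∈ A.vars, ∀ (H : Frame), eval H ρ (σs x) = ρ' x := by
      intro x hx H
      obtain ⟨y, hy⟩ := hinj.1 x hx
      rw [hy, hρ'app, if_pos hx, hy]
      rfl
    have hlhsvars : A.lhs.vars ⊆ A.vars := by
      intro x hx
      simp only [Axm.lhs, Tm.vars] at hx
      obtain ⟨i, -, hxi⟩ := Finset.mem_biUnion.mp hx
      rw [toTm_vars] at hxi
      exact Finset.mem_union_left _
        (Finset.mem_biUnion.mpr ⟨i, Finset.mem_univ i, hxi⟩)
    have hrhsvars : A.rhs.vars ⊆ A.vars := Finset.subset_union_right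
    have hevlhs : ∀ H : Frame, eval H ρ (A.lhs.msubst σs) = eval H ρ' A.lhs :=
      fun H => eval_msubst (fun x hx => hσx x (hlhsvars hx) H)
    have hevrhs : ∀ H : Frame, eval H ρ (A.rhs.msubst σs) = eval H ρ' A.rhs :=
      fun H => eval_msubst (fun x hx => hσx x (hrhsvars hx) H)
    have hρ'g : ρ'.gauge ≤ ρ.gauge + 1 := by
      refine Finset.sup_le (fun y hy => ?_)
      rw [hρ'app]
      split
      · exact (gauge_apply ρ _).trans (by omega)
      · exact le_trans (le_refl 1) (by omega)
    have hrl : (A.rhs.msubst σs).lh = A.rhs.lh :=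
      msubst_lh (fun x hx => hinj.1 x (hrhsvars hx))
    have hal : A.a + 1 ≤ (A.lhs.msubst σs).lh := lhs_lh_ge A σs
    have hsubl := subDeriv_lh_le hsub
    have hrp := Tm.lh_pos A.rhs
    have hlp := Tm.lh_pos (A.lhs.msubst σs)
    simp only [Deriv.lh] at hsubl h1 h2 h3 h4 ⊢
    -- abbreviations for gauges
    have hGg : (F.apSeq τ).gauge ≤ max F.gauge (seqGauge τ) := apSeq_gauge τ F
    set G := F.apSeq τ with hGdef
    set w : D := eval G ρ' A.rhs with hwdef
    have hwg : w.gauge ≤ max (max F.gauge (seqGauge τ)) (ρ.gauge + 1) + A.rhs.lh :=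
      (gauge_eval_le G ρ' A.rhs).trans
        (Nat.add_le_add_right (max_le_max hGg hρ'g) _)
    -- the forward sequence is empty
    have hforward : Approx (eval G ρ (A.lhs.msubst σs))
        (eval (G.apSeq []) ρ (A.rhs.msubst σs)) := by
      rw [show G.apSeq [] = G from rfl, hevlhs G, hevrhs G]
      exact hGm A hA ρ'
    by_cases hws : w = D.star
    · -- the backward direction is trivial
      refine ⟨[], [], trivial, trivial, Nat.zero_le _, Nat.zero_le _, Nat.zero_le _,
        Nat.zero_le _, Nat.zero_le _, Nat.zero_le _, hforward, ?_⟩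
      rw [hevrhs G, ← hwdef, hws]
      exact .star _
    · -- backward: one update
      set v : Fin A.a → D := fun i => (A.args i).evalA ρ' with hvdef
      set u' : Upd := ⟨A.k, A.a, v, w⟩ with hu'def
      have htg : tupGauge v ≤ ρ.gauge + 2 := by
        refine Finset.sup_le (fun i _ => ?_)
        refine (evalA_gauge ρ' (A.args i)).trans ?_
        have := hρ'g
        have h5 : max ρ'.gauge 1 ≤ ρ.gauge + 1 := max_le (by omega) (by omega)
        omega
      have hM1 : F.gauge ≤ max F.gauge (max (seqGauge τ) ρ.gauge) := le_max_left _ _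
      have hM2 : seqGauge τ ≤ max F.gauge (max (seqGauge τ) ρ.gauge) :=
        le_trans (le_max_left _ _) (le_max_right _ _)
      have hM3 : ρ.gauge ≤ max F.gauge (max (seqGauge τ) ρ.gauge) :=
        le_trans (le_max_right _ _) (le_max_right _ _)
      have hwg2 : w.gauge ≤ (max F.gauge (max (seqGauge τ) ρ.gauge) + 1) + A.rhs.lh := by
        refine hwg.trans (Nat.add_le_add_right ?_ _)
        apply max_le
        · apply max_le <;> omega
        · omega
      have hMU : max F.gauge (max (seqGauge τ) ρ.gauge) ≤
          U - ((A.lhs.msubst σs).lh + (A.rhs.msubst σs).lh + 1) :=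
        max_le (by omega) (max_le h2 h1)
      have hu'g : u'.gauge ≤ U := by
        have : u'.gauge = max (tupGauge v) w.gauge := rfl
        rw [this]
        apply max_le <;> omega
      have hupd : IsUpdate G U d u' := by
        refine ⟨hws, hu'g, A, ?_, ρ', rfl⟩
        exact subDeriv_axioms_sub hsub rfl
      have hbackward : Approx (eval G ρ (A.rhs.msubst σs))
          (eval (G.apSeq [u']) ρ (A.lhs.msubst σs)) := by
        have hG' := insert_entry_good hAx hGc hGm hA ρ' hws (Approx.rfl w)
        rw [hevrhs G, hevlhs (G.apSeq [u']), ← hwdef]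
        rw [show G.apSeq [u'] = G.apUpd u' from rfl, eval_lhs]
        exact le_app hG'.1 ⟨v, TApprox.rfl v, Finset.mem_insert_self _ _⟩
      refine ⟨[], [u'], trivial, ⟨hupd, trivial⟩, Nat.zero_le _, Nat.zero_le _,
        ?_, ?_, Nat.zero_le _, ?_, hforward, hbackward⟩
      · -- seqExt [u'] ≤ lh
        have : seqExt [u'] = A.a := by simp [seqExt, hu'def]
        omega
      · simp
      · -- seqGauge [u'] bound
        have : seqGauge [u'] = u'.gauge := by simp [seqGauge]
        rw [this, show u'.gauge = max (tupGauge v) w.gauge from rfl]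
        apply max_le <;> omega
  | symm d' ih =>
    intro hsub τ ρ hdom hτ h1 h2 h3 h4
    have hsub' : SubDeriv d' d := subDeriv_trans (.symm (.refl d')) hsub
    have hlh : d'.lh ≤ (Deriv.symm d').lh := by simp only [Deriv.lh]; omega
    obtain ⟨σ₁', σ₂', hs1, hs2, he1, hl1, he2, hl2, hg1, hg2, ha1, ha2⟩ :=
      ih hsub' τ ρ hdom hτ (h1.trans (by omega)) (h2.trans (by omega))
        (h3.trans (by omega)) (h4.trans (by omega))
    exact ⟨σ₂', σ₁', hs2, hs1, he2.trans (by omega), hl2.trans (by omega),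
      he1.trans (by omega), hl1.trans (by omega), hg2.trans (by omega),
      hg1.trans (by omega), ha2, ha1⟩
  | trans d₁ d₂ ih₁ ih₂ =>
    intro hsub τ ρ hdom hτ h1 h2 h3 h4
    have hsub₁ : SubDeriv d₁ d := subDeriv_trans (.transL (.refl d₁)) hsub
    have hsub₂ : SubDeriv d₂ d := subDeriv_trans (.transR (.refl d₂)) hsub
    have hlh : d₁.lh + d₂.lh + 1 ≤ (Deriv.trans d₁ d₂).lh := by
      simp only [Deriv.lh]; omega
    have hsubl := subDeriv_lh_le hsub
    have hM1 : F.gauge ≤ max F.gauge (max (seqGauge τ) ρ.gauge) := le_max_left _ _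
    have hM2 : seqGauge τ ≤ max F.gauge (max (seqGauge τ) ρ.gauge) :=
      le_trans (le_max_left _ _) (le_max_right _ _)
    have hM3 : ρ.gauge ≤ max F.gauge (max (seqGauge τ) ρ.gauge) :=
      le_trans (le_max_right _ _) (le_max_right _ _)
    have hMU : max F.gauge (max (seqGauge τ) ρ.gauge) ≤ U - (Deriv.trans d₁ d₂).lh :=
      max_le (by omega) (max_le h2 h1)
    -- forward direction
    obtain ⟨α₁, -, hsα, -, heα, hlα, -, -, hgα, -, haα, -⟩ :=
      ih₁ hsub₁ τ ρ hdom hτ (by omega) (by omega) (by omega) (by omega)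
    have hτα : IsUpdSeq U d F (τ ++ α₁) := isUpdSeq_append hτ hsα
    have hgτα : seqGauge (τ ++ α₁) ≤ U - d₂.lh := by
      rw [seqGauge_append]
      apply max_le <;> omega
    have heτα : seqExt (τ ++ α₁) ≤ U - d₂.lh := by
      rw [seqExt_append]
      apply max_le <;> omega
    have hlτα : (τ ++ α₁).length ≤ U - d₂.lh := by
      rw [List.length_append]; omega
    obtain ⟨β₁, -, hsβ, -, heβ, hlβ, -, -, hgβ, -, haβ, -⟩ :=
      ih₂ hsub₂ (τ ++ α₁) ρ hdom hτα (by omega) hgτα heτα hlτα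
    rw [apSeq_append] at hsβ haβ
    have hgβ' : seqGauge β₁ ≤
        max F.gauge (max (seqGauge τ) ρ.gauge) + d₁.lh + d₂.lh := by
      refine hgβ.trans ?_
      have hin : max F.gauge (max (seqGauge (τ ++ α₁)) ρ.gauge) ≤
          max F.gauge (max (seqGauge τ) ρ.gauge) + d₁.lh := by
        rw [seqGauge_append]
        apply max_le
        · omega
        · apply max_le
          · apply max_le <;> omega
          · omega
      omega
    -- backward direction
    obtain ⟨-, β₂, -, hsβ₂, -, -, heβ₂, hlβ₂, -, hgβ₂, -, haβ₂⟩ :=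
      ih₂ hsub₂ τ ρ hdom hτ (by omega) (by omega) (by omega) (by omega)
    have hτβ : IsUpdSeq U d F (τ ++ β₂) := isUpdSeq_append hτ hsβ₂
    have hgτβ : seqGauge (τ ++ β₂) ≤ U - d₁.lh := by
      rw [seqGauge_append]
      apply max_le <;> omega
    have heτβ : seqExt (τ ++ β₂) ≤ U - d₁.lh := by
      rw [seqExt_append]
      apply max_le <;> omega
    have hlτβ : (τ ++ β₂).length ≤ U - d₁.lh := by
      rw [List.length_append]; omega
    obtain ⟨-, α₂, -, hsα₂, -, -, heα₂, hlα₂, -, hgα₂, -, haα₂⟩ :=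
      ih₁ hsub₁ (τ ++ β₂) ρ hdom hτβ (by omega) hgτβ heτβ hlτβ
    rw [apSeq_append] at hsα₂ haα₂
    have hgα₂' : seqGauge α₂ ≤
        max F.gauge (max (seqGauge τ) ρ.gauge) + d₂.lh + d₁.lh := by
      refine hgα₂.trans ?_
      have hin : max F.gauge (max (seqGauge (τ ++ β₂)) ρ.gauge) ≤
          max F.gauge (max (seqGauge τ) ρ.gauge) + d₂.lh := by
        rw [seqGauge_append]
        apply max_le
        · omega
        · apply max_le
          · apply max_le <;> omega
          · omega
      omega
    refine ⟨α₁ ++ β₁, β₂ ++ α₂, isUpdSeq_append hsα hsβ, isUpdSeq_append hsβ₂ hsα₂,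
      ?_, ?_, ?_, ?_, ?_, ?_, ?_, ?_⟩
    · rw [seqExt_append]; apply max_le <;> omega
    · rw [List.length_append]; omega
    · rw [seqExt_append]; apply max_le <;> omega
    · rw [List.length_append]; omega
    · rw [seqGauge_append]; apply max_le <;> omega
    · rw [seqGauge_append]; apply max_le <;> omega
    · rw [apSeq_append]
      exact haα.trans' haβ
    · rw [apSeq_append]
      exact haβ₂.trans' haα₂
  | compat s x d' ih =>
    intro hsub τ ρ hdom hτ h1 h2 h3 h4
    have hsub' : SubDeriv d' d := subDeriv_trans (.compat s x (.refl d')) hsub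
    have hlh : d'.lh ≤ (Deriv.compat s x d').lh := by
      simp only [Deriv.lh]; omega
    obtain ⟨-, hGc, hGm, -, -, -⟩ :=
      seq_good hAx τ (Finset.Subset.refl F) hFc hM hFc hM hτ
    obtain ⟨α₁, α₂, hs1, hs2, he1, hl1, he2, hl2, hg1, hg2, ha1, ha2⟩ :=
      ih hsub' τ ρ hdom hτ (by omega) (by omega) (by omega) (by omega)
    obtain ⟨hsub1f, hc1, hm1, -, -, -⟩ :=
      seq_good hAx α₁ (Finset.Subset.refl (F.apSeq τ)) hGc hGm hGc hGm hs1
    obtain ⟨hsub2f, hc2, hm2, -, -, -⟩ :=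
      seq_good hAx α₂ (Finset.Subset.refl (F.apSeq τ)) hGc hGm hGc hGm hs2
    refine ⟨α₁, α₂, hs1, hs2, he1.trans (by omega), hl1.trans (by omega),
      he2.trans (by omega), hl2.trans (by omega), hg1.trans (by omega),
      hg2.trans (by omega), ?_, ?_⟩
    · rw [eval_subst, eval_subst]
      refine eval_mono hc1 hsub1f (fun y _ => ?_)
      rcases eq_or_ne y x with rfl | hne
      · rw [update_apply_self, update_apply_self]; exact ha1
      · rw [update_apply_ne _ _ hne, update_apply_ne _ _ hne]; exact Approx.rfl _
    · rw [eval_subst, eval_subst]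
      refine eval_mono hc2 hsub2f (fun y _ => ?_)
      rcases eq_or_ne y x with rfl | hne
      · rw [update_apply_self, update_apply_self]; exact ha2
      · rw [update_apply_ne _ _ hne, update_apply_ne _ _ hne]; exact Approx.rfl _
  | subst s x d' ih =>
    intro hsub τ ρ hdom hτ h1 h2 h3 h4
    have hsub' : SubDeriv d' d := subDeriv_trans (.subst s x (.refl d')) hsub
    have hlh : d'.lh + s.lh ≤ (Deriv.subst s x d').lh := by
      simp only [Deriv.lh]; omega
    have hsubl := subDeriv_lh_le hsub
    obtain ⟨hFG, hGc, hGm, -, -, -⟩ :=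
      seq_good hAx τ (Finset.Subset.refl F) hFc hM hFc hM hτ
    have hM1 : F.gauge ≤ max F.gauge (max (seqGauge τ) ρ.gauge) := le_max_left _ _
    have hM2 : seqGauge τ ≤ max F.gauge (max (seqGauge τ) ρ.gauge) :=
      le_trans (le_max_left _ _) (le_max_right _ _)
    have hM3 : ρ.gauge ≤ max F.gauge (max (seqGauge τ) ρ.gauge) :=
      le_trans (le_max_right _ _) (le_max_right _ _)
    have hMU : max F.gauge (max (seqGauge τ) ρ.gauge) ≤ U - (Deriv.subst s x d').lh :=
      max_le (by omega) (max_le h2 h1)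
    set ρs : Assignment := Finsupp.update ρ x (eval (F.apSeq τ) ρ s) with hρs
    have hdomρs : ρs.support ⊆ d.varsOf := by
      intro y hy
      rcases Finset.mem_insert.mp (update_support_sub ρ x _ hy) with rfl | hmem
      · refine subDeriv_vars_sub hsub ?_
        simp [Deriv.varsOf]
      · exact hdom hmem
    have hgs : (eval (F.apSeq τ) ρ s).gauge ≤
        max F.gauge (max (seqGauge τ) ρ.gauge) + s.lh := by
      refine (gauge_eval_le _ ρ s).trans (Nat.add_le_add_right ?_ _)
      have := apSeq_gauge τ F
      apply max_le <;> omega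
    have hgρs : ρs.gauge ≤ max F.gauge (max (seqGauge τ) ρ.gauge) + s.lh := by
      refine (update_gauge_le ρ x _).trans ?_
      apply max_le <;> omega
    obtain ⟨α₁, α₂, hs1, hs2, he1, hl1, he2, hl2, hg1, hg2, ha1, ha2⟩ :=
      ih hsub' τ ρs hdomρs hτ (by omega) (by omega) (by omega) (by omega)
    have hout : max F.gauge (max (seqGauge τ) ρs.gauge) ≤
        max F.gauge (max (seqGauge τ) ρ.gauge) + s.lh := by
      apply max_le
      · omega
      · apply max_le <;> omega
    obtain ⟨hsub1f, hc1, hm1, -, -, -⟩ :=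
      seq_good hAx α₁ (Finset.Subset.refl (F.apSeq τ)) hGc hGm hGc hGm hs1
    obtain ⟨hsub2f, hc2, hm2, -, -, -⟩ :=
      seq_good hAx α₂ (Finset.Subset.refl (F.apSeq τ)) hGc hGm hGc hGm hs2
    refine ⟨α₁, α₂, hs1, hs2, he1.trans (by omega), hl1.trans (by omega),
      he2.trans (by omega), hl2.trans (by omega), hg1.trans (by omega),
      hg2.trans (by omega), ?_, ?_⟩
    · rw [eval_subst, eval_subst, ← hρs]
      refine ha1.trans' (eval_mono hc1 (Finset.Subset.refl _) (fun y _ => ?_))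
      rcases eq_or_ne y x with rfl | hne
      · rw [hρs, update_apply_self, update_apply_self]
        exact eval_mono hc1 hsub1f (fun _ _ => Approx.rfl _)
      · rw [hρs, update_apply_ne _ _ hne, update_apply_ne _ _ hne]
        exact Approx.rfl _
    · rw [eval_subst, eval_subst, ← hρs]
      refine ha2.trans' (eval_mono hc2 (Finset.Subset.refl _) (fun y _ => ?_))
      rcases eq_or_ne y x with rfl | hne
      · rw [hρs, update_apply_self, update_apply_self]
        exact eval_mono hc2 hsub2f (fun _ _ => Approx.rfl _)
      · rw [hρs, update_apply_ne _ _ hne, update_apply_ne _ _ hne]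
        exact Approx.rfl _



/-- Quantitative soundness claim: fix a derivation `d` in
Variable Normal Form, a model `F` of `Ax` and `U` with `G(F) + lh(d) ≤ U`.
Let `d₀ ⊢ t = u` be a sub-derivation of `d`, `ρ` an assignment with
`dom(ρ) ⊆ var(d)`, and `σ` a sequence of updates based on `F`, `U` and `d`
with `G(ρ), G(σ), E(σ), seqlh(σ) ≤ U − lh(d₀)`. Then there are sequences
`σ₁`, `σ₂` of updates based on `F`, `U` and `d` with
`E(σᵢ), seqlh(σᵢ) ≤ lh(d₀)` and
`G(σᵢ) ≤ max(G(F), G(σ), G(ρ)) + lh(d₀)` such that, for `F' = F * σ`,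
`⟦t⟧_{F,ρ} ⊑ ⟦u⟧_{F'*σ₁,ρ}` and `⟦u⟧_{F,ρ} ⊑ ⟦t⟧_{F'*σ₂,ρ}`. -/
theorem soundness_claim (Ax : Set Axm) (hAx : NiceAxioms Ax)
    {t₀ u₀ : Tm} (d : Deriv Ax t₀ u₀) (hVNF : d.VNF)
    (F : Frame) (hFc : F.Consistent) (hM : IsModel F Ax)
    (U : ℕ) (hU : F.gauge + d.lh ≤ U)
    {t u : Tm} (d₀ : Deriv Ax t u) (hsub : SubDeriv d₀ d)
    (ρ : Assignment) (hdom : ρ.support ⊆ d.varsOf)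
    (σ : List Upd) (hσ : IsUpdSeq U d F σ)
    (h₁ : ρ.gauge ≤ U - d₀.lh) (h₂ : seqGauge σ ≤ U - d₀.lh)
    (h₃ : seqExt σ ≤ U - d₀.lh) (h₄ : σ.length ≤ U - d₀.lh) :
    ∃ σ₁ σ₂ : List Upd,
      IsUpdSeq U d F σ₁ ∧ IsUpdSeq U d F σ₂ ∧
      seqExt σ₁ ≤ d₀.lh ∧ σ₁.length ≤ d₀.lh ∧
      seqExt σ₂ ≤ d₀.lh ∧ σ₂.length ≤ d₀.lh ∧
      seqGauge σ₁ ≤ max F.gauge (max (seqGauge σ) ρ.gauge) + d₀.lh ∧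
      seqGauge σ₂ ≤ max F.gauge (max (seqGauge σ) ρ.gauge) + d₀.lh ∧
      Approx (eval F ρ t) (eval ((F.apSeq σ).apSeq σ₁) ρ u) ∧
      Approx (eval F ρ u) (eval ((F.apSeq σ).apSeq σ₂) ρ t) := by
  obtain ⟨σ₁', σ₂', hs1, hs2, he1, hl1, he2, hl2, hg1, hg2, ha1, ha2⟩ :=
    main_claim hAx d hVNF.1 F hFc hM U hU d₀ hsub [] ρ hdom trivial h₁
      (Nat.zero_le _) (Nat.zero_le _) (Nat.zero_le _)
  obtain ⟨-, hGc, hGm, -, -, -⟩ :=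
    seq_good hAx σ (Finset.Subset.refl F) hFc hM hFc hM hσ
  obtain ⟨-, hc1, -, hss1, -, -⟩ :=
    seq_good hAx σ₁' (apSeq_supset σ F) hFc hM hGc hGm hs1
  obtain ⟨-, hc2, -, hss2, -, -⟩ :=
    seq_good hAx σ₂' (apSeq_supset σ F) hFc hM hGc hGm hs2
  have hgmax : max F.gauge (max (seqGauge ([] : List Upd)) ρ.gauge) ≤
      max F.gauge (max (seqGauge σ) ρ.gauge) :=
    max_le_max le_rfl (max_le_max (Nat.zero_le _) le_rfl)
  refine ⟨σ₁', σ₂', hs1, hs2, he1, hl1, he2, hl2,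
    hg1.trans (Nat.add_le_add_right hgmax _), hg2.trans (Nat.add_le_add_right hgmax _),
    ?_, ?_⟩
  · exact ha1.trans' (eval_mono hc1 hss1 (fun _ _ => Approx.rfl _))
  · exact ha2.trans' (eval_mono hc2 hss2 (fun _ _ => Approx.rfl _))

end PETS
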